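/- arXiv:1808.04474 — 4 statements merged into one kernel-verified Lean document; each statement's English description precedes it below -/
import Mathlib

section
/- Fix V̄ > 0 and α ∈ (0,1), set c = ((1/α) − 1)^{1/4}, and define q_α(h) = α (h^4 + 2 c h^3 + 3 (1 + c^2) h^2 + 2 c h + c^2). Then for every real h one has the identity 𝒫_α(h) = q_α(h) (h − c)^2 + 4 (L(α) − V̄) h^3, and q_α(h) > 0 for every h > 0. Consequently, for every h > 0, 𝒫_α(h) is ≥, =, or ≤ q_α(h)(h − c)^2 according as V̄ is ≤, =, or ≥ L(α), respectively. -/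
/-- The mass polynomial 𝒫_α(h) = α h^6 + 3α h^4 − 4V̄ h^3 + 3(1−α) h^2 + (1−α). -/
noncomputable def massPoly (Vbar α h : ℝ) : ℝ :=
  α * h ^ 6 + 3 * α * h ^ 4 - 4 * Vbar * h ^ 3 + 3 * (1 - α) * h ^ 2 + (1 - α)

/-- The limiting function L(α) = α^{3/4}(1−α)^{1/4} + α^{1/4}(1−α)^{3/4}. -/
noncomputable def Lfun (α : ℝ) : ℝ :=
  α ^ ((3 : ℝ) / 4) * (1 - α) ^ ((1 : ℝ) / 4) + α ^ ((1 : ℝ) / 4) * (1 - α) ^ ((3 : ℝ) / 4)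

theorem stmt1 (Vbar α : ℝ) (hV : 0 < Vbar) (hα : α ∈ Set.Ioo (0 : ℝ) 1) :
    let c : ℝ := (1 / α - 1) ^ ((1 : ℝ) / 4)
    let q : ℝ → ℝ := fun h =>
      α * (h ^ 4 + 2 * c * h ^ 3 + 3 * (1 + c ^ 2) * h ^ 2 + 2 * c * h + c ^ 2)
    (∀ h : ℝ, massPoly Vbar α h = q h * (h - c) ^ 2 + 4 * (Lfun α - Vbar) * h ^ 3) ∧
    (∀ h : ℝ, 0 < h → 0 < q h) ∧
    (∀ h : ℝ, 0 < h →
      (Vbar ≤ Lfun α → q h * (h - c) ^ 2 ≤ massPoly Vbar α h) ∧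
      (Vbar = Lfun α → massPoly Vbar α h = q h * (h - c) ^ 2) ∧
      (Lfun α ≤ Vbar → massPoly Vbar α h ≤ q h * (h - c) ^ 2)) := by
  intro c q
  obtain ⟨hα0, hα1⟩ := hα
  have hx : (0:ℝ) ≤ 1 / α - 1 := by
    rw [sub_nonneg, le_div_iff₀ hα0]; linarith
  have hc0 : 0 ≤ c := Real.rpow_nonneg hx _
  have hcpos : 0 < c := by
    apply Real.rpow_pos_of_pos
    rw [sub_pos, lt_div_iff₀ hα0]; linarith
  have hc4 : c ^ 4 = 1 / α - 1 := by
    show ((1 / α - 1) ^ ((1 : ℝ) / 4)) ^ 4 = 1 / α - 1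
    rw [← Real.rpow_natCast ((1 / α - 1) ^ ((1 : ℝ) / 4)) 4, ← Real.rpow_mul hx]
    norm_num
  have hc4' : 1 - α = α * c ^ 4 := by
    rw [hc4]; field_simp
  have h1α : (0:ℝ) ≤ 1 - α := by linarith
  have hdiv : (1 - α) / α = c ^ 4 := by rw [hc4]; field_simp
  have hq : (1 - α) ^ ((1:ℝ)/4) = α ^ ((1:ℝ)/4) * c := by
    have heq : (1 - α) / α = 1 / α - 1 := by field_simp
    have hce : c = ((1 - α) / α) ^ ((1:ℝ)/4) := by rw [heq]
    rw [hce, Real.div_rpow h1α hα0.le]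
    have ha14 : (0:ℝ) < α ^ ((1:ℝ)/4) := Real.rpow_pos_of_pos hα0 _
    field_simp
  have hL : Lfun α = α * c + α * c ^ 3 := by
    unfold Lfun
    have hmul : α ^ ((3:ℝ)/4) * α ^ ((1:ℝ)/4) = α := by
      rw [← Real.rpow_add hα0]; norm_num
    have h1a34 : (1 - α) ^ ((3:ℝ)/4) = ((1 - α) ^ ((1:ℝ)/4)) ^ (3:ℕ) := by
      rw [← Real.rpow_natCast ((1 - α) ^ ((1:ℝ)/4)) 3, ← Real.rpow_mul h1α]
      norm_num
    have ha14 : (0:ℝ) < α ^ ((1:ℝ)/4) := Real.rpow_pos_of_pos hα0 _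
    have ha44 : (α ^ ((1:ℝ)/4)) ^ (4:ℕ) = α := by
      rw [← Real.rpow_natCast (α ^ ((1:ℝ)/4)) 4, ← Real.rpow_mul hα0.le]
      norm_num
    rw [h1a34, hq]
    linear_combination c * hmul + c ^ 3 * ha44
  have key : ∀ h : ℝ, massPoly Vbar α h = q h * (h - c) ^ 2 + 4 * (Lfun α - Vbar) * h ^ 3 := by
    intro h
    show massPoly Vbar α h =
      α * (h ^ 4 + 2 * c * h ^ 3 + 3 * (1 + c ^ 2) * h ^ 2 + 2 * c * h + c ^ 2) * (h - c) ^ 2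
        + 4 * (Lfun α - Vbar) * h ^ 3
    unfold massPoly
    linear_combination (3 * h ^ 2 + 1) * hc4' - 4 * h ^ 3 * hL
  have hqpos : ∀ h : ℝ, 0 < h → 0 < q h := by
    intro h hh
    show 0 < α * (h ^ 4 + 2 * c * h ^ 3 + 3 * (1 + c ^ 2) * h ^ 2 + 2 * c * h + c ^ 2)
    positivity
  refine ⟨key, hqpos, fun h hh => ?_⟩
  have h3 : 0 < h ^ 3 := by positivity
  refine ⟨fun hle => ?_, fun heq => ?_, fun hge => ?_⟩
  · rw [key h]; nlinarith
  · rw [key h, heq]; ring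
  · rw [key h]; nlinarith
end

section
/- Fix V̄ > 1 and α ∈ (0,1). The mass polynomial 𝒫_α has exactly one zero h_L in the interval (1, ∞), and this zero satisfies h_L > ((1/α) − 1)^{1/4}. -/
/-- If `1 < h` and `α h⁴ ≤ 1 - α`, the mass polynomial is negative at `h`. -/
lemma massPoly_neg_of_le (Vbar α h : ℝ) (hV : 1 < Vbar) (h1 : 1 < h) (hα0 : 0 < α)
    (hα1 : α < 1) (hle : α * h ^ 4 ≤ 1 - α) : massPoly Vbar α h < 0 := by
  have hp : (0:ℝ) < h := lt_trans one_pos h1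
  have hβ : (0:ℝ) < 1 - α := by linarith
  have t1 : α * h ^ 4 * (h ^ 2 + h + 4) ≤ (1 - α) * (h ^ 2 + h + 4) :=
    mul_le_mul_of_nonneg_right hle (by positivity)
  have h3 : 1 < h ^ 3 := one_lt_pow₀ h1 (by norm_num)
  have t2 : (1 - α) * (h ^ 2 + h + 4) < (1 - α) * (h * (4 * h ^ 2 + h + 1)) := by
    have : h ^ 2 + h + 4 < h * (4 * h ^ 2 + h + 1) := by nlinarith
    exact mul_lt_mul_of_pos_left this hβ
  have t3 : α * h ^ 3 * (h ^ 2 + h + 4) < (1 - α) * (4 * h ^ 2 + h + 1) := by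
    have hh : h * (α * h ^ 3 * (h ^ 2 + h + 4)) < h * ((1 - α) * (4 * h ^ 2 + h + 1)) := by
      calc h * (α * h ^ 3 * (h ^ 2 + h + 4)) = α * h ^ 4 * (h ^ 2 + h + 4) := by ring
        _ ≤ (1 - α) * (h ^ 2 + h + 4) := t1
        _ < (1 - α) * (h * (4 * h ^ 2 + h + 1)) := t2
        _ = h * ((1 - α) * (4 * h ^ 2 + h + 1)) := by ring
    exact lt_of_mul_lt_mul_left hh hp.le
  have id1 : α * h ^ 6 + 3 * α * h ^ 4 + 3 * (1 - α) * h ^ 2 + (1 - α) - 4 * h ^ 3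
      = (h - 1) * (α * h ^ 3 * (h ^ 2 + h + 4) - (1 - α) * (4 * h ^ 2 + h + 1)) := by
    ring
  have neg1 : (h - 1) * (α * h ^ 3 * (h ^ 2 + h + 4) - (1 - α) * (4 * h ^ 2 + h + 1)) < 0 :=
    mul_neg_of_pos_of_neg (by linarith) (by linarith)
  have hV3 : 4 * h ^ 3 < 4 * Vbar * h ^ 3 := by nlinarith [pow_pos hp 3]
  unfold massPoly
  linarith [id1 ▸ neg1]

/-- Two distinct roots `1 < a < b` with `α a⁴ > 1 - α` is impossible. -/
lemma massPoly_roots_unique (Vbar α a b : ℝ) (hα0 : 0 < α) (h1a : 1 < a) (hab : a < b)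
    (hA : 1 - α < α * a ^ 4) (ha0 : massPoly Vbar α a = 0) (hb0 : massPoly Vbar α b = 0) :
    False := by
  have hpa : (0:ℝ) < a := lt_trans one_pos h1a
  set G : ℝ → ℝ := fun x => α * x ^ 3 + 3 * (α * x) - 4 * Vbar
      + 3 * (1 - α) * x⁻¹ + (1 - α) * (x ^ 3)⁻¹ with hG
  have hGP : ∀ x : ℝ, 0 < x → G x = massPoly Vbar α x / x ^ 3 := by
    intro x hx
    field_simp [hG, massPoly]
    simp only [hG, massPoly]
    field_simp
  have hDer : ∀ x : ℝ, 0 < x → HasDerivAt G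
      (α * (3 * x ^ 2) + 3 * α + 3 * (1 - α) * (-(x ^ 2)⁻¹)
        + (1 - α) * (-(3 * x ^ 2) / (x ^ 3) ^ 2)) x := by
    intro x hx
    have hx0 : x ≠ 0 := ne_of_gt hx
    have d1 : HasDerivAt (fun y : ℝ => α * y ^ 3) (α * (3 * x ^ 2)) x := by
      simpa using (hasDerivAt_pow 3 x).const_mul α
    have d2 : HasDerivAt (fun y : ℝ => 3 * (α * y)) (3 * α) x := by
      simpa using ((hasDerivAt_id x).const_mul α).const_mul (3 : ℝ)
    have d3 : HasDerivAt (fun y : ℝ => 3 * (1 - α) * y⁻¹) (3 * (1 - α) * (-(x ^ 2)⁻¹)) x := by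
      simpa using (hasDerivAt_inv hx0).const_mul (3 * (1 - α))
    have d4 : HasDerivAt (fun y : ℝ => (1 - α) * (y ^ 3)⁻¹)
        ((1 - α) * (-(3 * x ^ 2) / (x ^ 3) ^ 2)) x := by
      have := ((hasDerivAt_pow 3 x).inv (pow_ne_zero 3 hx0)).const_mul (1 - α)
      simpa using this
    exact (((d1.add d2).sub_const (4 * Vbar)).add d3).add d4
  have hmono : StrictMonoOn G (Set.Ici a) := by
    apply strictMonoOn_of_deriv_pos (convex_Ici a)
    · intro x hx
      have hx0 : 0 < x := lt_of_lt_of_le hpa hx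
      exact ((hDer x hx0).differentiableAt.continuousAt).continuousWithinAt
    · intro x hx
      rw [interior_Ici] at hx
      have hxa : a < x := hx
      have hx0 : 0 < x := lt_trans hpa hxa
      rw [(hDer x hx0).deriv]
      have hx4 : 1 - α < α * x ^ 4 := by
        have : a ^ 4 < x ^ 4 := pow_lt_pow_left₀ hxa hpa.le (by norm_num)
        nlinarith
      have key : α * (3 * x ^ 2) + 3 * α + 3 * (1 - α) * (-(x ^ 2)⁻¹)
          + (1 - α) * (-(3 * x ^ 2) / (x ^ 3) ^ 2)
          = 3 * (x ^ 2 + 1) * (α * x ^ 4 - (1 - α)) / x ^ 4 := by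
        field_simp
        ring
      rw [key]
      apply div_pos (by nlinarith) (by positivity)
  have hGa : G a = 0 := by rw [hGP a hpa, ha0]; simp
  have hGb : G b = 0 := by rw [hGP b (lt_trans hpa hab), hb0]; simp
  have := hmono Set.self_mem_Ici (Set.mem_Ici.mpr hab.le) hab
  rw [hGa, hGb] at this
  exact lt_irrefl 0 this

theorem stmt4 (Vbar α : ℝ) (hV : 1 < Vbar) (hα : α ∈ Set.Ioo (0 : ℝ) 1) :
    ∃ hL : ℝ, 1 < hL ∧ massPoly Vbar α hL = 0 ∧ (1 / α - 1) ^ ((1 : ℝ) / 4) < hL ∧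
      ∀ h : ℝ, 1 < h → massPoly Vbar α h = 0 → h = hL := by
  obtain ⟨hα0, hα1⟩ := hα
  have hβ : (0:ℝ) < 1 - α := by linarith
  -- existence of a root via IVT on [1, M]
  set M : ℝ := max 2 (4 * Vbar / α) with hM
  have hM2 : (2:ℝ) ≤ M := le_max_left _ _
  have hM1 : (1:ℝ) ≤ M := by linarith
  have hMV : 4 * Vbar ≤ α * M := by
    have : 4 * Vbar / α ≤ M := le_max_right _ _
    calc 4 * Vbar = α * (4 * Vbar / α) := by field_simp
      _ ≤ α * M := by exact mul_le_mul_of_nonneg_left this hα0.le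
  have hP1 : massPoly Vbar α 1 < 0 := by unfold massPoly; nlinarith
  have hPM : 0 ≤ massPoly Vbar α M := by
    have hM0 : (0:ℝ) < M := by linarith
    have h1 : α * M ^ 6 - 4 * Vbar * M ^ 3 ≥ 0 := by
      have h5 : M ^ 3 ≤ M ^ 5 := pow_le_pow_right₀ hM1 (by norm_num)
      have : 4 * Vbar * M ^ 5 ≤ α * M * M ^ 5 :=
        mul_le_mul_of_nonneg_right hMV (by positivity)
      have hVpos : (0:ℝ) < 4 * Vbar := by linarith
      nlinarith [mul_le_mul_of_nonneg_left h5 hVpos.le]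
    unfold massPoly
    nlinarith [pow_pos hM0 4, pow_pos hM0 2]
  have hcont : ContinuousOn (fun h => massPoly Vbar α h) (Set.Icc 1 M) := by
    unfold massPoly; fun_prop
  have hIVT := intermediate_value_Icc hM1 hcont
  have h0mem : (0:ℝ) ∈ Set.Icc (massPoly Vbar α 1) (massPoly Vbar α M) :=
    ⟨hP1.le, hPM⟩
  obtain ⟨c, hcmem, hc0⟩ := hIVT h0mem
  have hc1 : 1 < c := by
    rcases lt_or_eq_of_le hcmem.1 with h | h
    · exact h
    · exfalso
      rw [← h] at hc0
      have : massPoly Vbar α 1 = 0 := by simpa using hc0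
      linarith
  -- the root satisfies α c⁴ > 1 - α
  have hkey : ∀ h : ℝ, 1 < h → massPoly Vbar α h = 0 → 1 - α < α * h ^ 4 := by
    intro h h1 h0
    by_contra hcon
    push_neg at hcon
    have := massPoly_neg_of_le Vbar α h hV h1 hα0 hα1 hcon
    rw [h0] at this
    exact lt_irrefl 0 this
  have hA := hkey c hc1 hc0
  refine ⟨c, hc1, hc0, ?_, ?_⟩
  · -- rpow bound
    have hx : (0:ℝ) ≤ 1 / α - 1 := by
      have : 1 ≤ 1 / α := one_le_one_div hα0 hα1.le
      linarith
    have hb4 : ((1 / α - 1) ^ ((1:ℝ) / 4)) ^ (4:ℕ) = 1 / α - 1 := by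
      rw [← Real.rpow_natCast ((1 / α - 1) ^ ((1:ℝ) / 4)) 4, ← Real.rpow_mul hx]
      norm_num
    have hc4 : 1 / α - 1 < c ^ 4 := by
      rw [div_sub' (ne_of_gt hα0), div_lt_iff₀ hα0]
      nlinarith
    by_contra hcon
    push_neg at hcon
    have hc0' : (0:ℝ) ≤ c := by linarith
    have := pow_le_pow_left₀ hc0' hcon 4
    rw [hb4] at this
    linarith
  · -- uniqueness
    intro h h1 h0
    rcases lt_trichotomy h c with hlt | heq | hgt
    · exact absurd (massPoly_roots_unique Vbar α h c hα0 h1 hlt (hkey h h1 h0) h0 hc0) not_false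
    · exact heq
    · exact absurd (massPoly_roots_unique Vbar α c h hα0 hc1 hgt hA hc0 h0) not_false
end

section
/- Fix V̄ = 1 and α ∈ (0,1). If 0 < α < 1/2, then the mass polynomial 𝒫_α has exactly one zero h_L in the interval (1, ∞), and this zero satisfies h_L > ((1/α) − 1)^{1/4}. If 1/2 ≤ α < 1, then 𝒫_α has no zero in (1, ∞). -/
private lemma massPoly_factor (α h : ℝ) :
    massPoly 1 α h = (h - 1) * (α * ((h + 1) * (h ^ 4 + 4 * h ^ 2 + 1)) - (4 * h ^ 2 + h + 1)) := by
  unfold massPoly; ring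

private lemma cross_pos (a b : ℝ) (ha : 0 < a) (hab : a < b) :
    0 < (4 * a ^ 2 + a + 1) * ((b + 1) * (b ^ 4 + 4 * b ^ 2 + 1))
      - (4 * b ^ 2 + b + 1) * ((a + 1) * (a ^ 4 + 4 * a ^ 2 + 1)) := by
  have hb : 0 < b := ha.trans hab
  have key : (4 * a ^ 2 + a + 1) * ((b + 1) * (b ^ 4 + 4 * b ^ 2 + 1))
      - (4 * b ^ 2 + b + 1) * ((a + 1) * (a ^ 4 + 4 * a ^ 2 + 1))
      = (b - a) * (4 * b ^ 2 + b ^ 3 + b ^ 4 + 4 * a * b + 5 * a * b ^ 2 + 2 * a * b ^ 3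
        + a * b ^ 4 + 4 * a ^ 2 + 5 * a ^ 2 * b + 18 * a ^ 2 * b ^ 2 + 5 * a ^ 2 * b ^ 3
        + 4 * a ^ 2 * b ^ 4 + a ^ 3 + 2 * a ^ 3 * b + 5 * a ^ 3 * b ^ 2 + 4 * a ^ 3 * b ^ 3
        + a ^ 4 + a ^ 4 * b + 4 * a ^ 4 * b ^ 2) := by ring
  rw [key]
  have h1 : 0 < b - a := by linarith
  have h2 : 0 < 4 * b ^ 2 + b ^ 3 + b ^ 4 + 4 * a * b + 5 * a * b ^ 2 + 2 * a * b ^ 3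
        + a * b ^ 4 + 4 * a ^ 2 + 5 * a ^ 2 * b + 18 * a ^ 2 * b ^ 2 + 5 * a ^ 2 * b ^ 3
        + 4 * a ^ 2 * b ^ 4 + a ^ 3 + 2 * a ^ 3 * b + 5 * a ^ 3 * b ^ 2 + 4 * a ^ 3 * b ^ 3
        + a ^ 4 + a ^ 4 * b + 4 * a ^ 4 * b ^ 2 := by positivity
  exact mul_pos h1 h2

set_option maxHeartbeats 1600000 in
theorem stmt5 (α : ℝ) (hα : α ∈ Set.Ioo (0 : ℝ) 1) :
    (α < 1 / 2 →
      ∃ hL : ℝ, 1 < hL ∧ massPoly 1 α hL = 0 ∧ (1 / α - 1) ^ ((1 : ℝ) / 4) < hL ∧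
        ∀ h : ℝ, 1 < h → massPoly 1 α h = 0 → h = hL) ∧
    (1 / 2 ≤ α → ∀ h : ℝ, 1 < h → massPoly 1 α h ≠ 0) := by
  obtain ⟨hα0, hα1⟩ := hα
  set R : ℝ → ℝ := fun h => α * ((h + 1) * (h ^ 4 + 4 * h ^ 2 + 1)) - (4 * h ^ 2 + h + 1)
    with hRdef
  constructor
  · intro hhalf
    set B : ℝ := 2 / α with hBdef
    have hB4 : 4 < B := by
      rw [hBdef, lt_div_iff₀ hα0]; linarith
    have hR1 : R 1 = 12 * α - 6 := by simp [hRdef]; ring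
    have hR1neg : R 1 < 0 := by rw [hR1]; linarith
    have hαB : α * B = 2 := by rw [hBdef]; field_simp
    have hRBpos : 0 < R B := by
      simp only [hRdef]
      nlinarith [sq_nonneg B, sq_nonneg (B - 4), pow_pos (by linarith : (0:ℝ) < B) 2,
        pow_pos (by linarith : (0:ℝ) < B) 3, pow_pos (by linarith : (0:ℝ) < B) 4,
        mul_pos hα0 (pow_pos (by linarith : (0:ℝ) < B) 4),
        mul_pos hα0 (pow_pos (by linarith : (0:ℝ) < B) 2)]
    have hcont : ContinuousOn R (Set.Icc 1 B) := (by continuity : Continuous R).continuousOn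
    have hivt := intermediate_value_Ioo (by linarith : (1:ℝ) ≤ B) hcont
    have h0mem : (0:ℝ) ∈ Set.Ioo (R 1) (R B) := ⟨hR1neg, hRBpos⟩
    obtain ⟨hL, hLmem, hR0⟩ := hivt h0mem
    obtain ⟨hL1, hLB⟩ := hLmem
    have hL0 : 0 < hL := by linarith
    have hReq : α * ((hL + 1) * (hL ^ 4 + 4 * hL ^ 2 + 1)) = 4 * hL ^ 2 + hL + 1 := by
      have := hR0
      simp only [hRdef] at this
      linarith
    refine ⟨hL, hL1, ?_, ?_, ?_⟩
    · rw [massPoly_factor]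
      rw [hRdef] at hR0
      simp only at hR0
      rw [hR0, mul_zero]
    · -- bound: (1/α - 1)^(1/4) < hL
      have hkey : 1 < α * (hL ^ 4 + 1) := by
        have hD : 0 < (hL + 1) * (hL ^ 4 + 4 * hL ^ 2 + 1) := by positivity
        nlinarith [pow_pos hL0 3, pow_pos hL0 6,
          mul_pos (pow_pos hL0 3) (by nlinarith : (0:ℝ) < hL ^ 3 - 1),
          mul_pos hα0 hD]
      have hlt : 1 / α - 1 < hL ^ 4 := by
        rw [div_sub' (ne_of_gt hα0), div_lt_iff₀ hα0]
        nlinarith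
      have hbase : 0 ≤ 1 / α - 1 := by
        have : 2 < 1 / α := by rw [lt_div_iff₀ hα0]; linarith
        linarith
      have hrpow : (1 / α - 1) ^ ((1:ℝ) / 4) < (hL ^ 4) ^ ((1:ℝ) / 4) :=
        Real.rpow_lt_rpow hbase hlt (by norm_num)
      have heq : (hL ^ 4) ^ ((1:ℝ) / 4) = hL := by
        rw [← Real.rpow_natCast hL 4, ← Real.rpow_mul hL0.le]
        norm_num
      rwa [heq] at hrpow
    · intro h hh1 hP0
      rw [massPoly_factor] at hP0
      have hne : h - 1 ≠ 0 := by linarith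
      have hRh : α * ((h + 1) * (h ^ 4 + 4 * h ^ 2 + 1)) = 4 * h ^ 2 + h + 1 := by
        rcases mul_eq_zero.mp hP0 with h' | h'
        · exact absurd h' hne
        · linarith
      by_contra hne'
      rcases lt_or_gt_of_ne hne' with hlt | hgt
      · have := cross_pos h hL (by linarith) hlt
        nlinarith [mul_pos (by positivity : (0:ℝ) < (h + 1) * (h ^ 4 + 4 * h ^ 2 + 1))
          (by positivity : (0:ℝ) < (hL + 1) * (hL ^ 4 + 4 * hL ^ 2 + 1))]
      · have := cross_pos hL h hL0 hgt
        nlinarith [mul_pos (by positivity : (0:ℝ) < (h + 1) * (h ^ 4 + 4 * h ^ 2 + 1))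
          (by positivity : (0:ℝ) < (hL + 1) * (hL ^ 4 + 4 * hL ^ 2 + 1))]
  · intro hhalf h hh1
    rw [massPoly_factor]
    have hD : 0 < (h + 1) * (h ^ 4 + 4 * h ^ 2 + 1) := by positivity
    have hRpos : 0 < α * ((h + 1) * (h ^ 4 + 4 * h ^ 2 + 1)) - (4 * h ^ 2 + h + 1) := by
      have h1 : 0 ≤ (α - 1 / 2) * ((h + 1) * (h ^ 4 + 4 * h ^ 2 + 1)) :=
        mul_nonneg (by linarith) hD.le
      have h2 : 0 < (h - 1) * (h ^ 4 + 2 * h ^ 3 + 6 * h ^ 2 + 2 * h + 1) :=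
        mul_pos (by linarith) (by positivity)
      have h3 : α * ((h + 1) * (h ^ 4 + 4 * h ^ 2 + 1)) - (4 * h ^ 2 + h + 1)
          = (α - 1 / 2) * ((h + 1) * (h ^ 4 + 4 * h ^ 2 + 1))
            + (1 / 2) * ((h - 1) * (h ^ 4 + 2 * h ^ 3 + 6 * h ^ 2 + 2 * h + 1)) := by ring
      linarith
    exact ne_of_gt (mul_pos (by linarith) hRpos)
end

section
/- Fix V̄ > 0 and let 0 < α₁ < α₂ < 1. (a) If h₁, h₂ > 1 satisfy 𝒫_{α₁}(h₁) = 0 and 𝒫_{α₂}(h₂) = 0 with h₁ ≥ ((1/α₁) − 1)^{1/4} and h₂ ≥ ((1/α₂) − 1)^{1/4}, then h₁ > h₂. (b) If in addition 0 < V̄ < 1, and h₁, h₂ satisfy 𝒫_{α₁}(h₁) = 0 and 𝒫_{α₂}(h₂) = 0 with 1 < h₁ ≤ ((1/α₁) − 1)^{1/4} and 1 < h₂ ≤ ((1/α₂) − 1)^{1/4}, then h₁ < h₂. -/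
lemma diff_identity (V a u v : ℝ) :
    massPoly V a u * v ^ 3 - massPoly V a v * u ^ 3 =
      (u - v) * (a * u^3 * v^3 * (u^2 + u*v + v^2 + 3)
        - (1 - a) * (3*u^2*v^2 + u^2 + u*v + v^2)) := by
  unfold massPoly; ring

lemma bracket_nonneg (a b u v : ℝ) (ha : 0 ≤ a) (hv : 0 ≤ v) (huv : v ≤ u)
    (h : b ≤ a * v ^ 4) :
    0 ≤ a * u^3 * v^3 * (u^2 + u*v + v^2 + 3) - b * (3*u^2*v^2 + u^2 + u*v + v^2) := by
  have hu : 0 ≤ u := hv.trans huv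
  have h3 : v ^ 3 ≤ u ^ 3 := pow_le_pow_left₀ hv huv 3
  have h2' : v ^ 2 ≤ u ^ 2 := pow_le_pow_left₀ hv huv 2
  have h1 : b * (3*u^2*v^2 + u^2 + u*v + v^2) ≤ (a * v^4) * (3*u^2*v^2 + u^2 + u*v + v^2) := by
    have : 0 ≤ 3*u^2*v^2 + u^2 + u*v + v^2 := by positivity
    nlinarith
  have h2 : (a * v^4) * (3*u^2*v^2 + u^2 + u*v + v^2) ≤ a * u^3 * v^3 * (u^2 + u*v + v^2 + 3) := by
    have key : v^4 * (3*u^2*v^2 + u^2 + u*v + v^2) ≤ u^3 * v^3 * (u^2 + u*v + v^2 + 3) := by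
      nlinarith [mul_nonneg (mul_nonneg (pow_nonneg hu 2) (pow_nonneg hv 3)) (sub_nonneg.2 h3),
        mul_nonneg (mul_nonneg (pow_nonneg hu 2) (pow_nonneg hv 4)) (sub_nonneg.2 h2'),
        mul_nonneg (mul_nonneg (pow_nonneg hu 2) (pow_nonneg hv 5)) (sub_nonneg.2 huv),
        mul_nonneg (mul_nonneg (pow_nonneg hu 2) (pow_nonneg hv 3)) (sub_nonneg.2 huv),
        mul_nonneg (mul_nonneg hu (pow_nonneg hv 3)) (sub_nonneg.2 h2'),
        mul_nonneg (pow_nonneg hv 3) (sub_nonneg.2 h3)]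
    nlinarith [mul_le_mul_of_nonneg_left key ha]
  linarith

lemma bracket_nonpos (a b u v : ℝ) (ha : 0 ≤ a) (hv : 0 ≤ v) (huv : v ≤ u)
    (h : a * u ^ 4 ≤ b) :
    a * u^3 * v^3 * (u^2 + u*v + v^2 + 3) - b * (3*u^2*v^2 + u^2 + u*v + v^2) ≤ 0 := by
  have hu : 0 ≤ u := hv.trans huv
  have h3 : v ^ 3 ≤ u ^ 3 := pow_le_pow_left₀ hv huv 3
  have h2' : v ^ 2 ≤ u ^ 2 := pow_le_pow_left₀ hv huv 2
  have h1 : (a * u^4) * (3*u^2*v^2 + u^2 + u*v + v^2) ≤ b * (3*u^2*v^2 + u^2 + u*v + v^2) := by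
    have : 0 ≤ 3*u^2*v^2 + u^2 + u*v + v^2 := by positivity
    nlinarith
  have h2 : a * u^3 * v^3 * (u^2 + u*v + v^2 + 3) ≤ (a * u^4) * (3*u^2*v^2 + u^2 + u*v + v^2) := by
    have key : u^3 * v^3 * (u^2 + u*v + v^2 + 3) ≤ u^4 * (3*u^2*v^2 + u^2 + u*v + v^2) := by
      nlinarith [mul_nonneg (mul_nonneg (pow_nonneg hu 5) (pow_nonneg hv 2)) (sub_nonneg.2 huv),
        mul_nonneg (mul_nonneg (pow_nonneg hu 4) (pow_nonneg hv 2)) (sub_nonneg.2 h2'),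
        mul_nonneg (mul_nonneg (pow_nonneg hu 3) (pow_nonneg hv 2)) (sub_nonneg.2 h3),
        mul_nonneg (pow_nonneg hu 3) (sub_nonneg.2 h3),
        mul_nonneg (mul_nonneg (pow_nonneg hu 3) hv) (sub_nonneg.2 h2'),
        mul_nonneg (mul_nonneg (pow_nonneg hu 3) (pow_nonneg hv 2)) (sub_nonneg.2 huv)]
    nlinarith [mul_le_mul_of_nonneg_left key ha]
  linarith

lemma mono_alpha (V a₁ a₂ h : ℝ) (h1 : 1 < h) (ha : a₁ < a₂) :
    massPoly V a₁ h < massPoly V a₂ h := by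
  unfold massPoly
  have hp : 0 < h ^ 6 + 3*h^4 - 3*h^2 - 1 := by nlinarith [sq_nonneg h, sq_nonneg (h^2-1)]
  nlinarith [mul_pos (sub_pos.2 ha) hp]

lemma rpow_quarter_le (x h : ℝ) (hx : 0 ≤ x) (hh : 0 ≤ h)
    (hle : x ^ ((1 : ℝ)/4) ≤ h) : x ≤ h ^ 4 := by
  have key : (x ^ ((1:ℝ)/4)) ^ (4:ℕ) = x := by
    rw [← Real.rpow_natCast (x ^ ((1:ℝ)/4)) 4, ← Real.rpow_mul hx]
    norm_num
  calc x = (x ^ ((1:ℝ)/4)) ^ (4:ℕ) := key.symm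
    _ ≤ h ^ 4 := pow_le_pow_left₀ (Real.rpow_nonneg hx _) hle 4

lemma le_rpow_quarter (x h : ℝ) (hx : 0 ≤ x) (hh : 0 ≤ h)
    (hle : h ≤ x ^ ((1 : ℝ)/4)) : h ^ 4 ≤ x := by
  have key : (x ^ ((1:ℝ)/4)) ^ (4:ℕ) = x := by
    rw [← Real.rpow_natCast (x ^ ((1:ℝ)/4)) 4, ← Real.rpow_mul hx]
    norm_num
  calc h ^ 4 ≤ (x ^ ((1:ℝ)/4)) ^ (4:ℕ) := pow_le_pow_left₀ hh hle 4
    _ = x := key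

theorem stmt18 (Vbar α₁ α₂ : ℝ) (hV : 0 < Vbar)
    (hα₁ : 0 < α₁) (hα₁₂ : α₁ < α₂) (hα₂ : α₂ < 1) :
    -- (a) the upper zero branch is strictly decreasing in α
    (∀ h₁ h₂ : ℝ, 1 < h₁ → 1 < h₂ →
      massPoly Vbar α₁ h₁ = 0 → massPoly Vbar α₂ h₂ = 0 →
      (1 / α₁ - 1) ^ ((1 : ℝ) / 4) ≤ h₁ → (1 / α₂ - 1) ^ ((1 : ℝ) / 4) ≤ h₂ →
      h₂ < h₁) ∧
    -- (b) for 0 < V̄ < 1, the lower zero branch is strictly increasing in α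
    (Vbar < 1 →
      ∀ h₁ h₂ : ℝ, 1 < h₁ → 1 < h₂ →
        massPoly Vbar α₁ h₁ = 0 → massPoly Vbar α₂ h₂ = 0 →
        h₁ ≤ (1 / α₁ - 1) ^ ((1 : ℝ) / 4) → h₂ ≤ (1 / α₂ - 1) ^ ((1 : ℝ) / 4) →
        h₁ < h₂) := by
  have hα₁1 : α₁ < 1 := hα₁₂.trans hα₂
  have hx₁ : (0:ℝ) ≤ 1 / α₁ - 1 := by
    rw [sub_nonneg, le_div_iff₀ hα₁]; linarith
  constructor
  · intro h₁ h₂ hh₁ hh₂ e₁ e₂ hb₁ _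
    by_contra hcon
    push_neg at hcon  -- h₁ ≤ h₂
    -- 1 - α₁ ≤ α₁ * h₁^4
    have hq : 1 / α₁ - 1 ≤ h₁ ^ 4 := rpow_quarter_le _ _ hx₁ (by linarith) hb₁
    have hb : 1 - α₁ ≤ α₁ * h₁ ^ 4 := by
      have := mul_le_mul_of_nonneg_left hq hα₁.le
      calc 1 - α₁ = α₁ * (1 / α₁ - 1) := by field_simp
        _ ≤ α₁ * h₁ ^ 4 := this
    have hbr := bracket_nonneg α₁ (1 - α₁) h₂ h₁ hα₁.le (by linarith) hcon hb
    have hid := diff_identity Vbar α₁ h₂ h₁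
    rw [e₁] at hid
    have hnn : 0 ≤ massPoly Vbar α₁ h₂ * h₁ ^ 3 := by
      rw [show massPoly Vbar α₁ h₂ * h₁ ^ 3 = massPoly Vbar α₁ h₂ * h₁ ^ 3 - 0 * h₂ ^ 3 by ring,
        hid]
      exact mul_nonneg (by linarith) hbr
    have hpos : 0 < massPoly Vbar α₂ h₂ := by
      have := mono_alpha Vbar α₁ α₂ h₂ hh₂ hα₁₂
      have h₁3 : (0:ℝ) < h₁ ^ 3 := by positivity
      nlinarith
    rw [e₂] at hpos; exact lt_irrefl 0 hpos
  · intro _ h₁ h₂ hh₁ hh₂ e₁ e₂ hb₁ _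
    by_contra hcon
    push_neg at hcon  -- h₂ ≤ h₁
    have hq : h₁ ^ 4 ≤ 1 / α₁ - 1 := le_rpow_quarter _ _ hx₁ (by linarith) hb₁
    have hb : α₁ * h₁ ^ 4 ≤ 1 - α₁ := by
      have := mul_le_mul_of_nonneg_left hq hα₁.le
      calc α₁ * h₁ ^ 4 ≤ α₁ * (1 / α₁ - 1) := this
        _ = 1 - α₁ := by field_simp
    have hbr := bracket_nonpos α₁ (1 - α₁) h₁ h₂ hα₁.le (by linarith) hcon hb
    have hid := diff_identity Vbar α₁ h₁ h₂
    rw [e₁] at hid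
    have hnn : 0 ≤ massPoly Vbar α₁ h₂ * h₁ ^ 3 := by
      have : (0:ℝ) * h₂ ^ 3 - massPoly Vbar α₁ h₂ * h₁ ^ 3 =
          (h₁ - h₂) * (α₁ * h₁^3 * h₂^3 * (h₁^2 + h₁*h₂ + h₂^2 + 3)
            - (1 - α₁) * (3*h₁^2*h₂^2 + h₁^2 + h₁*h₂ + h₂^2)) := hid
      nlinarith [mul_nonneg (sub_nonneg.2 hcon) (neg_nonneg.2 hbr)]
    have hneg : 0 < massPoly Vbar α₂ h₂ := by
      have := mono_alpha Vbar α₁ α₂ h₂ hh₂ hα₁₂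
      have h₁3 : (0:ℝ) < h₁ ^ 3 := by positivity
      nlinarith
    rw [e₂] at hneg; exact lt_irrefl 0 hneg
end
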